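/- Weight-alternation structure of the change under edge removal (the content of Lemmas 2–4 of the paper, removal case): let M be a stable b-matching of G, let e = {u,v} ∈ M, and let M̃ be a stable b-matching of the graph G − e (obtained by deleting edge e). Then (i) every edge f ∈ M \ M̃ with f ≠ e shares an endpoint with some edge g ∈ M̃ \ M satisfying f ≺ g, and (ii) every edge g ∈ M̃ \ M shares an endpoint with some edge f ∈ M \ M̃ satisfying g ≺ f. -/
import Mathlib


/-!
Framework: finite simple graph `G` on vertex set `V`, positive edge weights `ω` on
unordered pairs of distinct vertices, capacities `b`, and a strict linear order
`prec` on unordered pairs of distinct vertices refining `ω`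
(the paper's tie-breaking rule).  `M` is a set of edges.
-/

variable {V : Type*} [Fintype V] [DecidableEq V]

/-- Number of edges of `M` incident to vertex `u`. -/
def bDeg (M : Finset (Sym2 V)) (u : V) : ℕ :=
  (M.filter (fun e => u ∈ e)).card

/-- `u` is saturated in `M`: it is incident to exactly `b u` edges of `M`. -/
def Saturated (b : V → ℕ) (M : Finset (Sym2 V)) (u : V) : Prop :=
  bDeg M u = b u

/-- `M` is a `b`-matching of `G`: a set of edges of `G` such that every vertex `u`
is incident to at most `b u` edges of `M`. -/
def IsBMatching (G : SimpleGraph V) (b : V → ℕ) (M : Finset (Sym2 V)) : Prop :=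
  (∀ e ∈ M, e ∈ G.edgeSet) ∧ ∀ u : V, bDeg M u ≤ b u

/-- `M` is a stable `b`-matching of `G` (termination condition of the b-suitor
algorithm): for every non-matching edge `e` of `G` there is an endpoint `x` of `e`
which is saturated and all of whose matched edges beat `e` in the order `prec`. -/
def IsStable (G : SimpleGraph V) (b : V → ℕ) (prec : Sym2 V → Sym2 V → Prop)
    (M : Finset (Sym2 V)) : Prop :=
  IsBMatching G b M ∧
    ∀ e ∈ G.edgeSet, e ∉ M →
      ∃ x ∈ e, Saturated b M x ∧ ∀ f ∈ M, x ∈ f → prec e f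

/-- Lemmas 2-4, removal case: weight-alternation structure of the
change under edge removal. -/
theorem removal_alternation
    (G : SimpleGraph V) (ω : Sym2 V → ℝ) (b : V → ℕ)
    (prec : Sym2 V → Sym2 V → Prop)
    (hω : ∀ e : Sym2 V, ¬ e.IsDiag → 0 < ω e)
    (hirr : ∀ e : Sym2 V, ¬ prec e e)
    (htrans : ∀ e f g : Sym2 V, prec e f → prec f g → prec e g)
    (htotal : ∀ e f : Sym2 V, ¬ e.IsDiag → ¬ f.IsDiag → e ≠ f → prec e f ∨ prec f e)
    (href : ∀ e f : Sym2 V, ¬ e.IsDiag → ¬ f.IsDiag → ω e < ω f → prec e f)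
    (M : Finset (Sym2 V)) (hM : IsStable G b prec M)
    (u v : V) (huv : G.Adj u v) (heM : s(u, v) ∈ M)
    (Mt : Finset (Sym2 V))
    (hMt : IsStable (G.deleteEdges {s(u, v)}) b prec Mt) :
    (∀ f ∈ M \ Mt, f ≠ s(u, v) →
        ∃ g ∈ Mt \ M, (∃ x, x ∈ f ∧ x ∈ g) ∧ prec f g) ∧
      (∀ g ∈ Mt \ M, ∃ f ∈ M \ Mt, (∃ x, x ∈ g ∧ x ∈ f) ∧ prec g f) := by
  obtain ⟨⟨hMsub, hMcap⟩, hMstab⟩ := hM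
  obtain ⟨⟨hMtsub, hMtcap⟩, hMtstab⟩ := hMt
  constructor
  · intro f hf hfe
    rw [Finset.mem_sdiff] at hf
    obtain ⟨hfM, hfMt⟩ := hf
    have hfG : f ∈ (G.deleteEdges {s(u, v)}).edgeSet := by
      rw [SimpleGraph.edgeSet_deleteEdges]
      exact ⟨hMsub f hfM, by simpa using hfe⟩
    obtain ⟨x, hxf, hsat, hbeat⟩ := hMtstab f hfG hfMt
    -- find g ∈ Mt at x with g ∉ M
    by_contra hcon
    push_neg at hcon
    have hsubset : insert f (Mt.filter (fun g => x ∈ g)) ⊆ M.filter (fun g => x ∈ g) := by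
      intro g hg
      rcases Finset.mem_insert.mp hg with rfl | hg
      · exact Finset.mem_filter.mpr ⟨hfM, hxf⟩
      · rw [Finset.mem_filter] at hg ⊢
        refine ⟨?_, hg.2⟩
        by_contra hgM
        exact hcon g (Finset.mem_sdiff.mpr ⟨hg.1, hgM⟩) ⟨x, hxf, hg.2⟩
          (hbeat g hg.1 hg.2)
    have hcard := Finset.card_le_card hsubset
    rw [Finset.card_insert_of_notMem (by simp [hfMt])] at hcard
    have : b x + 1 ≤ b x := by
      calc b x + 1 = bDeg Mt x + 1 := by rw [hsat]
        _ ≤ bDeg M x := hcard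
        _ ≤ b x := hMcap x
    omega
  · intro g hg
    rw [Finset.mem_sdiff] at hg
    obtain ⟨hgMt, hgM⟩ := hg
    have hgG : g ∈ G.edgeSet := by
      have := hMtsub g hgMt
      rw [SimpleGraph.edgeSet_deleteEdges] at this
      exact this.1
    obtain ⟨x, hxg, hsat, hbeat⟩ := hMstab g hgG hgM
    by_contra hcon
    push_neg at hcon
    have hsubset : insert g (M.filter (fun f => x ∈ f)) ⊆ Mt.filter (fun f => x ∈ f) := by
      intro f hf
      rcases Finset.mem_insert.mp hf with rfl | hf
      · exact Finset.mem_filter.mpr ⟨hgMt, hxg⟩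
      · rw [Finset.mem_filter] at hf ⊢
        refine ⟨?_, hf.2⟩
        by_contra hfMt
        exact hcon f (Finset.mem_sdiff.mpr ⟨hf.1, hfMt⟩) ⟨x, hxg, hf.2⟩
          (hbeat f hf.1 hf.2)
    have hcard := Finset.card_le_card hsubset
    rw [Finset.card_insert_of_notMem (by simp [hgM])] at hcard
    have : b x + 1 ≤ b x := by
      calc b x + 1 = bDeg M x + 1 := by rw [hsat]
        _ ≤ bDeg Mt x := hcard
        _ ≤ b x := hMtcap x
    omega
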